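/- Let F : EuclideanSpace ℝ (Fin n) → H be Lipschitz with constant L_F ≥ 0, where H is a real normed space. Let x, a ∈ EuclideanSpace ℝ (Fin n), let B_X ≥ 0 with |x(i)| ≤ B_X for all i, let |a(i)| ≤ 1 for all i, and let δ ≥ 0. Define x̃(i) := x(i) · exp(δ · a(i)). Then ‖F(x̃) − F(x)‖ ≤ δ · exp(δ) · L_F · B_X · ‖a‖. In particular, for δ ≤ 1 the prediction drift is at most δ · e · L_F · B_X · ‖a‖, i.e., of order O(δ). -/
import Mathlib

lemma abs_exp_sub_one_le' (t : ℝ) : |Real.exp t - 1| ≤ |t| * Real.exp |t| := by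
  rcases le_or_gt 0 t with h | h
  · rw [abs_of_nonneg h, abs_of_nonneg (by linarith [Real.one_le_exp h])]
    have h1 := Real.add_one_le_exp (-t)
    have he : Real.exp (-t) * Real.exp t = 1 := by
      rw [← Real.exp_add]; simp
    nlinarith [Real.exp_pos t, Real.exp_pos (-t)]
  · have h1 : Real.exp t < 1 := by
      rw [← Real.exp_zero]; exact Real.exp_lt_exp.2 h
    rw [abs_of_nonpos (by linarith), abs_of_neg h]
    have := Real.add_one_le_exp t
    have h2 : (1:ℝ) ≤ Real.exp (-t) := Real.one_le_exp (by linarith)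
    nlinarith

lemma euclid_norm_le_of_abs_le {n : ℕ} (v w : EuclideanSpace ℝ (Fin n))
    (h : ∀ i, |v i| ≤ |w i|) : ‖v‖ ≤ ‖w‖ := by
  rw [EuclideanSpace.norm_eq, EuclideanSpace.norm_eq]
  apply Real.sqrt_le_sqrt
  apply Finset.sum_le_sum
  intro i _
  rw [Real.norm_eq_abs, Real.norm_eq_abs]
  exact pow_le_pow_left₀ (abs_nonneg _) (h i) 2

/-- drift bound for multiplicative input edits (Corollary 1).
For an `L_F`-Lipschitz forecaster `F` and the exponential-form edit
`x̃ i = x i · exp(δ · a i)` with `|x i| ≤ B_X` and `|a i| ≤ 1`,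
`‖F(x̃) − F(x)‖ ≤ δ e^δ L_F B_X ‖a‖`, and for `δ ≤ 1` the drift is at most
`δ · e · L_F · B_X · ‖a‖`, i.e. `O(δ)`. -/
theorem multiplicative_input_drift_bound
    {n : ℕ} {H : Type*} [NormedAddCommGroup H] [NormedSpace ℝ H]
    (F : EuclideanSpace ℝ (Fin n) → H)
    (L : ℝ) (hL : 0 ≤ L) (hLip : ∀ a b, ‖F a - F b‖ ≤ L * ‖a - b‖)
    (x a xt : EuclideanSpace ℝ (Fin n))
    (B : ℝ) (hB : 0 ≤ B) (hx : ∀ i, |x i| ≤ B) (ha : ∀ i, |a i| ≤ 1)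
    (δ : ℝ) (hδ : 0 ≤ δ)
    (hxt : ∀ i, xt i = x i * Real.exp (δ * a i)) :
    ‖F xt - F x‖ ≤ δ * Real.exp δ * L * B * ‖a‖
    ∧ (δ ≤ 1 → ‖F xt - F x‖ ≤ δ * Real.exp 1 * L * B * ‖a‖) := by
  have key : ‖F xt - F x‖ ≤ δ * Real.exp δ * L * B * ‖a‖ := by
    have hc : 0 ≤ δ * Real.exp δ * B := by positivity
    have hnorm : ‖xt - x‖ ≤ (δ * Real.exp δ * B) * ‖a‖ := by
      have : ‖xt - x‖ ≤ ‖(δ * Real.exp δ * B) • a‖ := by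
        apply euclid_norm_le_of_abs_le
        intro i
        have hsub : (xt - x) i = x i * (Real.exp (δ * a i) - 1) := by
          simp [hxt i]; ring
        have hsmul : ((δ * Real.exp δ * B) • a) i = (δ * Real.exp δ * B) * a i := rfl
        rw [hsub, hsmul, abs_mul, abs_mul]
        have h1 : |Real.exp (δ * a i) - 1| ≤ |δ * a i| * Real.exp |δ * a i| :=
          abs_exp_sub_one_le' _
        have h2 : |δ * a i| ≤ δ * |a i| := by
          rw [abs_mul, abs_of_nonneg hδ]
        have h3 : |δ * a i| ≤ δ := by
          calc |δ * a i| ≤ δ * |a i| := h2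
          _ ≤ δ * 1 := by exact mul_le_mul_of_nonneg_left (ha i) hδ
          _ = δ := mul_one δ
        have h4 : Real.exp |δ * a i| ≤ Real.exp δ := Real.exp_le_exp.2 h3
        calc |x i| * |Real.exp (δ * a i) - 1|
            ≤ B * (|δ * a i| * Real.exp |δ * a i|) := by
              apply mul_le_mul (hx i) h1 (abs_nonneg _) hB
          _ ≤ B * ((δ * |a i|) * Real.exp δ) := by
              apply mul_le_mul_of_nonneg_left _ hB
              apply mul_le_mul h2 h4 (Real.exp_pos _).le
              positivity
          _ = |δ * Real.exp δ * B| * |a i| := by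
              rw [abs_of_nonneg hc]; ring
      calc ‖xt - x‖ ≤ ‖(δ * Real.exp δ * B) • a‖ := this
        _ = |δ * Real.exp δ * B| * ‖a‖ := by rw [norm_smul, Real.norm_eq_abs]
        _ = (δ * Real.exp δ * B) * ‖a‖ := by rw [abs_of_nonneg hc]
    calc ‖F xt - F x‖ ≤ L * ‖xt - x‖ := hLip xt x
      _ ≤ L * ((δ * Real.exp δ * B) * ‖a‖) := by
          exact mul_le_mul_of_nonneg_left hnorm hL
      _ = δ * Real.exp δ * L * B * ‖a‖ := by ring
  refine ⟨key, fun hδ1 => key.trans ?_⟩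
  have : Real.exp δ ≤ Real.exp 1 := Real.exp_le_exp.2 hδ1
  have hn : (0:ℝ) ≤ ‖a‖ := norm_nonneg a
  nlinarith [Real.exp_pos δ, mul_nonneg (mul_nonneg hδ hL) (mul_nonneg hB hn)]
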